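/- Let A be an associative ring with a unit and K ∈ A an invertible element. Then the map T̃_K : A³ → A³, T̃_K(X,Y,Z) = (KXK⁻¹, YK + ZX, Z), satisfies the tetrahedron equation; furthermore T̃_K is bijective, its inverse is the map (X̂,Ŷ,Ẑ) ↦ (K⁻¹X̂K, ŶK⁻¹ − ẐK⁻¹X̂, Ẑ), and this inverse map also satisfies the tetrahedron equation. -/
import Mathlib


/-- `T` acting on factors 1,2,3 of the sixfold Cartesian product `D⁶`. -/
def tetra123 {D : Type*} (T : D × D × D → D × D × D) :
    D × D × D × D × D × D → D × D × D × D × D × D :=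
  fun q =>
    match q with
    | (x, y, z, r, s, t) =>
      ((T (x, y, z)).1, (T (x, y, z)).2.1, (T (x, y, z)).2.2, r, s, t)

/-- `T` acting on factors 1,4,5 of the sixfold Cartesian product `D⁶`. -/
def tetra145 {D : Type*} (T : D × D × D → D × D × D) :
    D × D × D × D × D × D → D × D × D × D × D × D :=
  fun q =>
    match q with
    | (x, y, z, r, s, t) =>
      ((T (x, r, s)).1, y, z, (T (x, r, s)).2.1, (T (x, r, s)).2.2, t)

/-- `T` acting on factors 2,4,6 of the sixfold Cartesian product `D⁶`. -/
def tetra246 {D : Type*} (T : D × D × D → D × D × D) :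
    D × D × D × D × D × D → D × D × D × D × D × D :=
  fun q =>
    match q with
    | (x, y, z, r, s, t) =>
      (x, (T (y, r, t)).1, z, (T (y, r, t)).2.1, s, (T (y, r, t)).2.2)

/-- `T` acting on factors 3,5,6 of the sixfold Cartesian product `D⁶`. -/
def tetra356 {D : Type*} (T : D × D × D → D × D × D) :
    D × D × D × D × D × D → D × D × D × D × D × D :=
  fun q =>
    match q with
    | (x, y, z, r, s, t) =>
      (x, y, (T (z, s, t)).1, r, (T (z, s, t)).2.1, (T (z, s, t)).2.2)

/-- The (Zamolodchikov) tetrahedron equation for a map `T : D³ → D³`. -/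
def IsTetrahedronMap {D : Type*} (T : D × D × D → D × D × D) : Prop :=
  tetra123 T ∘ tetra145 T ∘ tetra246 T ∘ tetra356 T =
    tetra356 T ∘ tetra246 T ∘ tetra145 T ∘ tetra123 T

theorem stmt_6 {A : Type*} [Ring A] (K : Aˣ) :
    IsTetrahedronMap (fun p : A × A × A =>
      ((K : A) * p.1 * ((K⁻¹ : Aˣ) : A), p.2.1 * (K : A) + p.2.2 * p.1, p.2.2)) ∧
    Function.Bijective (fun p : A × A × A =>
      ((K : A) * p.1 * ((K⁻¹ : Aˣ) : A), p.2.1 * (K : A) + p.2.2 * p.1, p.2.2)) ∧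
    Function.LeftInverse
      (fun p : A × A × A =>
        (((K⁻¹ : Aˣ) : A) * p.1 * (K : A), p.2.1 * ((K⁻¹ : Aˣ) : A) - p.2.2 * ((K⁻¹ : Aˣ) : A) * p.1, p.2.2))
      (fun p : A × A × A =>
        ((K : A) * p.1 * ((K⁻¹ : Aˣ) : A), p.2.1 * (K : A) + p.2.2 * p.1, p.2.2)) ∧
    Function.RightInverse
      (fun p : A × A × A =>
        (((K⁻¹ : Aˣ) : A) * p.1 * (K : A), p.2.1 * ((K⁻¹ : Aˣ) : A) - p.2.2 * ((K⁻¹ : Aˣ) : A) * p.1, p.2.2))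
      (fun p : A × A × A =>
        ((K : A) * p.1 * ((K⁻¹ : Aˣ) : A), p.2.1 * (K : A) + p.2.2 * p.1, p.2.2)) ∧
    IsTetrahedronMap (fun p : A × A × A =>
      (((K⁻¹ : Aˣ) : A) * p.1 * (K : A), p.2.1 * ((K⁻¹ : Aˣ) : A) - p.2.2 * ((K⁻¹ : Aˣ) : A) * p.1, p.2.2)) := by

  have hL : Function.LeftInverse
      (fun p : A × A × A =>
        (((K⁻¹ : Aˣ) : A) * p.1 * (K : A), p.2.1 * ((K⁻¹ : Aˣ) : A) - p.2.2 * ((K⁻¹ : Aˣ) : A) * p.1, p.2.2))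
      (fun p : A × A × A =>
        ((K : A) * p.1 * ((K⁻¹ : Aˣ) : A), p.2.1 * (K : A) + p.2.2 * p.1, p.2.2)) := by
    rintro ⟨x, y, z⟩
    simp [mul_assoc, add_mul, Units.mul_inv_cancel_left, Units.inv_mul_cancel_left,
      Units.mul_inv_cancel_right, Units.inv_mul_cancel_right]
  have hR : Function.RightInverse
      (fun p : A × A × A =>
        (((K⁻¹ : Aˣ) : A) * p.1 * (K : A), p.2.1 * ((K⁻¹ : Aˣ) : A) - p.2.2 * ((K⁻¹ : Aˣ) : A) * p.1, p.2.2))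
      (fun p : A × A × A =>
        ((K : A) * p.1 * ((K⁻¹ : Aˣ) : A), p.2.1 * (K : A) + p.2.2 * p.1, p.2.2)) := by
    rintro ⟨x, y, z⟩
    simp [mul_assoc, sub_mul, Units.mul_inv_cancel_left, Units.inv_mul_cancel_left,
      Units.mul_inv_cancel_right, Units.inv_mul_cancel_right]
  have h1 : IsTetrahedronMap (fun p : A × A × A =>
      ((K : A) * p.1 * ((K⁻¹ : Aˣ) : A), p.2.1 * (K : A) + p.2.2 * p.1, p.2.2)) := by
    unfold IsTetrahedronMap
    funext ⟨x, y, z, r, s, t⟩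
    simp only [tetra123, tetra145, tetra246, tetra356, Function.comp_apply]
    refine Prod.ext ?_ (Prod.ext ?_ (Prod.ext ?_ (Prod.ext ?_ (Prod.ext ?_ ?_)))) <;>
      simp [mul_assoc, mul_add, add_mul, Units.mul_inv_cancel_left, Units.inv_mul_cancel_left,
        Units.mul_inv_cancel_right, Units.inv_mul_cancel_right] <;> abel
  have h2 : IsTetrahedronMap (fun p : A × A × A =>
      (((K⁻¹ : Aˣ) : A) * p.1 * (K : A), p.2.1 * ((K⁻¹ : Aˣ) : A) - p.2.2 * ((K⁻¹ : Aˣ) : A) * p.1, p.2.2)) := by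
    unfold IsTetrahedronMap
    funext ⟨x, y, z, r, s, t⟩
    simp only [tetra123, tetra145, tetra246, tetra356, Function.comp_apply]
    refine Prod.ext ?_ (Prod.ext ?_ (Prod.ext ?_ (Prod.ext ?_ (Prod.ext ?_ ?_)))) <;>
      simp [mul_assoc, mul_sub, sub_mul, mul_add, add_mul, Units.mul_inv_cancel_left,
        Units.inv_mul_cancel_left, Units.mul_inv_cancel_right, Units.inv_mul_cancel_right] <;> abel
  exact ⟨h1, ⟨hL.injective, hR.surjective⟩, hL, hR, h2⟩
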